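/- Let λ ≠ 0, m ≠ 1 be real constants, set a = λ(m−1), and fix ε ∈ ℝ. If φ : ℝ × ℝ → ℝ is a positive differentiable solution of u_t + u^{m−1}·u_x + λ·u^m = 0 on ℝ², then the function ψ(x,t) = (φ(x, t + (ε/a)e^{a x})^{1−m} − ε e^{a x})^{1/(1−m)} satisfies the same equation at every point (x,t) where φ(x, t + (ε/a)e^{a x})^{1−m} − ε e^{a x} > 0. -/

import Mathlib

open Real

/-- case k = m−1, a = λ(m−1). If φ is a positive differentiable
solution of `u_t + u^{m−1}·u_x + λ·u^m = 0` on ℝ², then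
`ψ(x,t) = (φ(x, t + (ε/a)e^{ax})^{1−m} − ε e^{ax})^{1/(1−m)}`
satisfies the same equation at every point where
`φ(x, t + (ε/a)e^{ax})^{1−m} − ε e^{ax} > 0`. -/
theorem case2_G5_transformation
    (lam m : ℝ) (hlam : lam ≠ 0) (hm : m ≠ 1) (a : ℝ) (ha : a = lam * (m - 1))
    (ε : ℝ)
    (φ : ℝ × ℝ → ℝ)
    (hφ : Differentiable ℝ φ)
    (hpos : ∀ x t : ℝ, 0 < φ (x, t))
    (hsol : ∀ x t : ℝ,
      fderiv ℝ φ (x, t) (0, 1) + φ (x, t) ^ (m - 1) * fderiv ℝ φ (x, t) (1, 0)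
        + lam * φ (x, t) ^ m = 0) :
    ∀ ψ : ℝ × ℝ → ℝ,
      ψ = (fun p : ℝ × ℝ =>
        (φ (p.1, p.2 + (ε / a) * exp (a * p.1)) ^ (1 - m)
          - ε * exp (a * p.1)) ^ (1 / (1 - m))) →
      ∀ x t : ℝ,
        0 < φ (x, t + (ε / a) * exp (a * x)) ^ (1 - m) - ε * exp (a * x) →
        DifferentiableAt ℝ ψ (x, t) ∧
        fderiv ℝ ψ (x, t) (0, 1) + ψ (x, t) ^ (m - 1) * fderiv ℝ ψ (x, t) (1, 0)
          + lam * ψ (x, t) ^ m = 0 := by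
  intro ψ hψ x t hwpos
  subst hψ
  have hm1 : (1 : ℝ) - m ≠ 0 := sub_ne_zero.mpr (Ne.symm hm)
  have ha0 : a ≠ 0 := by
    rw [ha]; exact mul_ne_zero hlam (sub_ne_zero.mpr hm)
  -- notation
  have hupos : 0 < φ (x, t + (ε / a) * exp (a * x)) := hpos x _
  set e : ℝ := Real.exp (a * x) with he
  set s : ℝ := t + (ε / a) * e with hs
  set u : ℝ := φ (x, s) with hu
  set w : ℝ := u ^ (1 - m) - ε * e with hwdef
  have hw : 0 < w := hwpos
  -- derivative of the inner exponential term
  have hexp0 : HasDerivAt (fun y : ℝ => Real.exp (a * y)) (e * a) x := by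
    have h := ((hasDerivAt_id x).const_mul a).exp
    simpa using h
  have hexp : HasDerivAt (fun y : ℝ => (ε / a) * Real.exp (a * y)) (ε * e) x := by
    have h := hexp0.const_mul (ε / a)
    rwa [mul_comm e a, ← mul_assoc, div_mul_cancel₀ ε ha0] at h
  have hexp2 : HasDerivAt (fun y : ℝ => ε * Real.exp (a * y)) (ε * (e * a)) x :=
    hexp0.const_mul ε
  set L₁ : ℝ × ℝ →L[ℝ] ℝ := ContinuousLinearMap.fst ℝ ℝ ℝ with hL₁
  set L₂ : ℝ × ℝ →L[ℝ] ℝ := ContinuousLinearMap.snd ℝ ℝ ℝ with hL₂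
  have hF : HasFDerivAt (fun p : ℝ × ℝ => (p.1, p.2 + (ε / a) * Real.exp (a * p.1)))
      (L₁.prod (L₂ + (ε * e) • L₁)) (x, t) := by
    apply HasFDerivAt.prodMk (hasFDerivAt_fst)
    exact (hasFDerivAt_snd).add (hexp.comp_hasFDerivAt (f := Prod.fst) (x, t) hasFDerivAt_fst)
  have hφ' : HasFDerivAt φ (fderiv ℝ φ (x, s)) (x, s) := (hφ (x, s)).hasFDerivAt
  set D : ℝ × ℝ →L[ℝ] ℝ := fderiv ℝ φ (x, s) with hD
  have hcomp : HasFDerivAt (fun p : ℝ × ℝ => φ (p.1, p.2 + (ε / a) * Real.exp (a * p.1)))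
      (D.comp (L₁.prod (L₂ + (ε * e) • L₁))) (x, t) := hφ'.comp (x, t) hF
  have h2 : HasFDerivAt
      (fun p : ℝ × ℝ => φ (p.1, p.2 + (ε / a) * Real.exp (a * p.1)) ^ (1 - m))
      (((1 - m) * u ^ (1 - m - 1)) • (D.comp (L₁.prod (L₂ + (ε * e) • L₁)))) (x, t) :=
    hcomp.rpow_const (Or.inl hupos.ne')
  have h3 : HasFDerivAt (fun p : ℝ × ℝ => ε * Real.exp (a * p.1))
      ((ε * (e * a)) • L₁) (x, t) :=
    hexp2.comp_hasFDerivAt (f := Prod.fst) (x, t) hasFDerivAt_fst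
  have h4 : HasFDerivAt
      (fun p : ℝ × ℝ => φ (p.1, p.2 + (ε / a) * Real.exp (a * p.1)) ^ (1 - m)
        - ε * Real.exp (a * p.1))
      (((1 - m) * u ^ (1 - m - 1)) • (D.comp (L₁.prod (L₂ + (ε * e) • L₁)))
        - (ε * (e * a)) • L₁) (x, t) := h2.sub h3
  have h5 : HasFDerivAt
      (fun p : ℝ × ℝ => (φ (p.1, p.2 + (ε / a) * Real.exp (a * p.1)) ^ (1 - m)
        - ε * Real.exp (a * p.1)) ^ (1 / (1 - m)))
      ((1 / (1 - m) * w ^ (1 / (1 - m) - 1)) •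
        (((1 - m) * u ^ (1 - m - 1)) • (D.comp (L₁.prod (L₂ + (ε * e) • L₁)))
          - (ε * (e * a)) • L₁)) (x, t) :=
    h4.rpow_const (Or.inl hw.ne')
  refine ⟨h5.differentiableAt, ?_⟩
  rw [h5.fderiv]
  simp only [ContinuousLinearMap.smul_apply, ContinuousLinearMap.sub_apply,
    ContinuousLinearMap.coe_comp', Function.comp_apply, ContinuousLinearMap.prod_apply,
    ContinuousLinearMap.add_apply, ContinuousLinearMap.coe_fst', ContinuousLinearMap.coe_snd',
    smul_eq_mul, mul_zero, mul_one, add_zero, zero_add]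
  have hwval : φ (x, t + ε / a * rexp (a * x)) ^ (1 - m) - ε * rexp (a * x) = w := rfl
  simp only [hwval, hL₁, hL₂, ContinuousLinearMap.coe_fst', ContinuousLinearMap.coe_snd',
    mul_zero, mul_one, add_zero, zero_add]
  have hsplit : ((1:ℝ), ε * e) = ((1:ℝ), (0:ℝ)) + (ε * e) • ((0:ℝ), (1:ℝ)) := by
    simp [Prod.ext_iff]
  rw [hsplit, map_add D, map_smul D]
  simp only [smul_eq_mul]
  set A : ℝ := D (1, 0) with hAdef
  set B : ℝ := D (0, 1) with hBdef
  have hQpos : 0 < w + ε * e := by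
    have : w + ε * e = u ^ (1 - m) := by rw [hwdef]; ring
    rw [this]; exact Real.rpow_pos_of_pos hupos _
  have hQ : u ^ (1 - m) = w + ε * e := by rw [hwdef]; ring
  -- rewrite the u-powers
  have hP : u ^ (1 - m - 1) = (w + ε * e) / u := by
    rw [Real.rpow_sub hupos, Real.rpow_one, hQ]
  have hum1 : u ^ (m - 1) = (w + ε * e)⁻¹ := by
    have h1 : m - 1 = -(1 - m) := by ring
    rw [h1, Real.rpow_neg hupos.le, hQ]
  have hum : u ^ m = u * (w + ε * e)⁻¹ := by
    have h := Real.rpow_add hupos 1 (m - 1)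
    have h1 : (1:ℝ) + (m - 1) = m := by ring
    rw [h1, Real.rpow_one, hum1] at h
    exact h
  -- rewrite the w-powers
  have hw1 : (w ^ (1 / (1 - m))) ^ (m - 1) = w⁻¹ := by
    rw [← Real.rpow_mul hw.le]
    have h1 : 1 / (1 - m) * (m - 1) = -1 := by field_simp; ring
    rw [h1, Real.rpow_neg_one]
  have hw2 : (w ^ (1 / (1 - m))) ^ m = w ^ (m / (1 - m)) := by
    rw [← Real.rpow_mul hw.le]
    ring_nf
  have hw3 : w ^ (1 / (1 - m) - 1) = w ^ (m / (1 - m)) := by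
    congr 1
    field_simp
    ring
  rw [hP, hw1, hw2, hw3]
  set W : ℝ := w ^ (m / (1 - m)) with hWdef
  -- the original equation at the shifted point
  have hsolv := hsol x s
  rw [← hD, ← hu, ← hAdef, ← hBdef, hum1, hum] at hsolv
  have hBval : B = -((w + ε * e)⁻¹ * A + lam * (u * (w + ε * e)⁻¹)) := by
    linarith
  rw [hBval, ha]
  field_simp
  ring
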